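/- Let F be a field of characteristic 2 and K = F(η) a separable quadratic extension with η² + η = δ ∈ F \ ℘(F), where ℘(F) = {x² + x : x ∈ F}. Then K^{×2} ∩ F^× = F^{×2}; that is, if an element of F^× is a square in K, it is already a square in F. -/

import Mathlib

/-- For `K = F(η)` a separable quadratic extension of a field `F` of
characteristic 2, with `η² + η = δ ∉ ℘(F)`, one has `K^{×2} ∩ F^× = F^{×2}`:
any nonzero element of `F` that is a square in `K` is a square in `F`. -/
theorem stmt0 (F K : Type*) [Field F] [CharP F 2] [Field K] [Algebra F K]
    (δ : F) (hδ : ¬ ∃ x : F, x ^ 2 + x = δ)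
    (η : K) (hη : η ^ 2 + η = algebraMap F K δ)
    (hrank : Module.finrank F K = 2)
    (a : F) (ha : a ≠ 0) (k : K) (hk : k ^ 2 = algebraMap F K a) :
    ∃ f : F, f ^ 2 = a := by
  have hinj : Function.Injective (algebraMap F K) := (algebraMap F K).injective
  by_cases hkF : ∃ f : F, algebraMap F K f = k
  · obtain ⟨f, hf⟩ := hkF
    refine ⟨f, hinj ?_⟩
    rw [map_pow, hf, hk]
  · exfalso
    haveI : CharP K 2 := charP_of_injective_algebraMap hinj 2
    have h2K : (2 : K) = 0 := CharTwo.two_eq_zero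
    have hηF : ¬ ∃ u : F, algebraMap F K u = η := by
      rintro ⟨u, hu⟩
      refine hδ ⟨u, hinj ?_⟩
      rw [map_add, map_pow, hu, hη]
    -- {1, k} is linearly independent
    have hind : LinearIndependent F ![1, k] := by
      rw [LinearIndependent.pair_iff]
      intro s t hst
      by_cases ht : t = 0
      · subst ht
        simp only [smul_eq_mul, zero_smul, add_zero] at hst
        have : algebraMap F K s = 0 := by
          simpa [Algebra.smul_def] using hst
        exact ⟨hinj (by simpa using this), rfl⟩
      · exfalso
        apply hkF
        refine ⟨-s / t, ?_⟩
        rw [Algebra.smul_def, Algebra.smul_def, mul_one] at hst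
        have htK : algebraMap F K t ≠ 0 := fun h => ht (hinj (by simpa using h))
        rw [map_div₀, map_neg, div_eq_iff htK]
        linear_combination -hst
    have hcard : Fintype.card (Fin 2) = Module.finrank F K := by simp [hrank]
    let B := basisOfLinearIndependentOfCardEqFinrank hind hcard
    have hB : ⇑B = ![1, k] := coe_basisOfLinearIndependentOfCardEqFinrank hind hcard
    set u := B.repr η 0 with hu
    set v := B.repr η 1 with hv
    have hrepr : η = algebraMap F K u + algebraMap F K v * k := by
      have hs := B.sum_repr η
      rw [Fin.sum_univ_two] at hs
      rw [← hs, hB]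
      simp [Algebra.smul_def, hu, hv, hB]
    -- compute η² + η
    have hcomp : algebraMap F K (u ^ 2 + v ^ 2 * a + u) + algebraMap F K v * k
        = algebraMap F K δ := by
      rw [← hη, hrepr]
      simp only [map_add, map_mul, map_pow]
      linear_combination (-(algebraMap F K v) ^ 2) * hk +
        (-(algebraMap F K u) * (algebraMap F K v) * k) * h2K
    by_cases hv0 : v = 0
    · apply hηF
      refine ⟨u, ?_⟩
      rw [hrepr, hv0, map_zero, zero_mul, add_zero]
    · apply hkF
      refine ⟨(δ - (u ^ 2 + v ^ 2 * a + u)) / v, ?_⟩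
      have hvK : algebraMap F K v ≠ 0 := fun h => hv0 (hinj (by simpa using h))
      have hvk : algebraMap F K v * k = algebraMap F K (δ - (u ^ 2 + v ^ 2 * a + u)) := by
        rw [map_sub]
        linear_combination hcomp
      rw [map_div₀, ← hvk, mul_comm, mul_div_assoc, div_self hvK, mul_one]
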